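/- Suppose ρ and ξ are bipartite states (on spaces of equal dimensions) such that ρ⊗ξ is 1-distillable. Then the state σ = (1/2)|00⟩⟨00| ⊗ ρ + (1/2)|11⟩⟨11| ⊗ ξ (where the flag qubits |0⟩,|1⟩ are split between Alice and Bob) is 2-distillable: σ⊗σ is 1-distillable. -/

import Mathlib

open Matrix BigOperators
open scoped ComplexOrder

/-- Partial transpose over Alice's system of an operator on `A ⊗ B`. -/
def ptAlice {A B : Type*} (M : Matrix (A × B) (A × B) ℂ) :
    Matrix (A × B) (A × B) ℂ :=
  Matrix.of fun p q => M (q.1, p.2) (p.1, q.2)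

/-- A bipartite operator `τ` on `A ⊗ B` is 1-distillable if there is a vector
`ψ` of Schmidt rank 2 (the rank of its reshaping into an Alice-by-Bob matrix)
with `⟨ψ| T_Alice(τ) |ψ⟩ < 0`. -/
def OneDistillable {A B : Type*} [Fintype A] [Fintype B]
    [DecidableEq A] [DecidableEq B]
    (τ : Matrix (A × B) (A × B) ℂ) : Prop :=
  ∃ ψ : A × B → ℂ,
    (Matrix.of (fun a b => ψ (a, b)) : Matrix A B ℂ).rank = 2 ∧
    (star ψ ⬝ᵥ (ptAlice τ).mulVec ψ).re < 0

/-- Tensor product of two bipartite operators, regrouped so that Alice holds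
`A₁ × A₂` and Bob holds `B₁ × B₂`. -/
def bipKron {A1 B1 A2 B2 : Type*}
    (M : Matrix (A1 × B1) (A1 × B1) ℂ) (N : Matrix (A2 × B2) (A2 × B2) ℂ) :
    Matrix ((A1 × A2) × (B1 × B2)) ((A1 × A2) × (B1 × B2)) ℂ :=
  Matrix.of fun p q =>
    M (p.1.1, p.2.1) (q.1.1, q.2.1) * N (p.1.2, p.2.2) (q.1.2, q.2.2)

/-- The flagged state `σ = (1/2)|00⟩⟨00| ⊗ ρ + (1/2)|11⟩⟨11| ⊗ ξ`, with Alice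
holding one flag qubit (together with the `A` parts) and Bob the other flag
qubit (with the `B` parts). -/
noncomputable def flagged {A B : Type*}
    (ρ ξ : Matrix (A × B) (A × B) ℂ) :
    Matrix ((Fin 2 × A) × (Fin 2 × B)) ((Fin 2 × A) × (Fin 2 × B)) ℂ :=
  Matrix.of fun p q =>
    (1 / 2 : ℂ) *
      ((if p.1.1 = 0 ∧ p.2.1 = 0 ∧ q.1.1 = 0 ∧ q.2.1 = 0 then
          ρ (p.1.2, p.2.2) (q.1.2, q.2.2) else 0) +
        (if p.1.1 = 1 ∧ p.2.1 = 1 ∧ q.1.1 = 1 ∧ q.2.1 = 1 then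
          ξ (p.1.2, p.2.2) (q.1.2, q.2.2) else 0))

private lemma rank_embed {A B : Type*} [Fintype A] [Fintype B] [DecidableEq A] [DecidableEq B]
    (S : Matrix (A × A) (B × B) ℂ) :
    (Matrix.of (fun x y =>
      if x.1.1 = 0 ∧ x.2.1 = 1 ∧ y.1.1 = 0 ∧ y.2.1 = 1 then
        S (x.1.2, x.2.2) (y.1.2, y.2.2) else 0) :
      Matrix ((Fin 2 × A) × (Fin 2 × A)) ((Fin 2 × B) × (Fin 2 × B)) ℂ).rank = S.rank := by
  set N : Matrix ((Fin 2 × A) × (Fin 2 × A)) ((Fin 2 × B) × (Fin 2 × B)) ℂ :=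
    Matrix.of (fun x y =>
      if x.1.1 = 0 ∧ x.2.1 = 1 ∧ y.1.1 = 0 ∧ y.2.1 = 1 then
        S (x.1.2, x.2.2) (y.1.2, y.2.2) else 0) with hNdef
  set E : Matrix ((Fin 2 × A) × (Fin 2 × A)) (A × A) ℂ :=
    Matrix.of (fun x i => if x = ((0, i.1), (1, i.2)) then 1 else 0) with hE
  set F : Matrix (B × B) ((Fin 2 × B) × (Fin 2 × B)) ℂ :=
    Matrix.of (fun j y => if y = ((0, j.1), (1, j.2)) then 1 else 0) with hF
  have hN : N = E * S * F := by
    ext ⟨⟨xf1, xa1⟩, ⟨xf2, xa2⟩⟩ ⟨⟨yf1, yb1⟩, ⟨yf2, yb2⟩⟩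
    fin_cases xf1 <;> fin_cases xf2 <;> fin_cases yf1 <;> fin_cases yf2 <;>
      simp [hNdef, hE, hF, Matrix.mul_apply, Fintype.sum_prod_type, Prod.ext_iff, ite_and]
  have hS : S = Eᵀ * N * Fᵀ := by
    ext ⟨i1, i2⟩ ⟨j1, j2⟩
    simp [hNdef, hE, hF, Matrix.mul_apply, Fintype.sum_prod_type, Prod.ext_iff, ite_and,
      Matrix.transpose_apply]
  refine le_antisymm ?_ ?_
  · rw [hN]
    exact (Matrix.rank_mul_le_left _ _).trans (Matrix.rank_mul_le_right _ _)
  · conv_lhs => rw [hS]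
    exact (Matrix.rank_mul_le_left _ _).trans (Matrix.rank_mul_le_right _ _)

private lemma pt_entry {A B : Type*} (ρ ξ : Matrix (A × B) (A × B) ℂ)
    (s t : (A × A) × (B × B)) :
    ptAlice (bipKron (flagged ρ ξ) (flagged ρ ξ))
      (((0, s.1.1), (1, s.1.2)), ((0, s.2.1), (1, s.2.2)))
      (((0, t.1.1), (1, t.1.2)), ((0, t.2.1), (1, t.2.2)))
    = (1 / 4 : ℂ) * ptAlice (bipKron ρ ξ) s t := by
  simp [ptAlice, bipKron, flagged]
  ring

private lemma collapse {A B : Type*} [Fintype A] [Fintype B]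
    (g : (A × A) × (B × B) → ℂ) :
    (∑ p : ((Fin 2 × A) × (Fin 2 × A)) × ((Fin 2 × B) × (Fin 2 × B)),
      if p.1.1.1 = 0 ∧ p.1.2.1 = 1 ∧ p.2.1.1 = 0 ∧ p.2.2.1 = 1 then
        g ((p.1.1.2, p.1.2.2), (p.2.1.2, p.2.2.2)) else 0)
    = ∑ s : (A × A) × (B × B), g s := by
  simp [Fintype.sum_prod_type, Fin.sum_univ_two]

private lemma collapse' {A B : Type*} [Fintype A] [Fintype B]
    (f : ((Fin 2 × A) × (Fin 2 × A)) × ((Fin 2 × B) × (Fin 2 × B)) → ℂ)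
    (g : (A × A) × (B × B) → ℂ)
    (hg : ∀ s : (A × A) × (B × B),
      f (((0, s.1.1), (1, s.1.2)), ((0, s.2.1), (1, s.2.2))) = g s)
    (h0 : ∀ p, ¬(p.1.1.1 = 0 ∧ p.1.2.1 = 1 ∧ p.2.1.1 = 0 ∧ p.2.2.1 = 1) → f p = 0) :
    ∑ p, f p = ∑ s, g s := by
  rw [← collapse g]
  refine Finset.sum_congr rfl fun p _ => ?_
  by_cases hc : p.1.1.1 = 0 ∧ p.1.2.1 = 1 ∧ p.2.1.1 = 0 ∧ p.2.2.1 = 1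
  · rw [if_pos hc, ← hg]
    obtain ⟨⟨⟨f1, a1⟩, ⟨f2, a2⟩⟩, ⟨⟨g1, b1⟩, ⟨g2, b2⟩⟩⟩ := p
    obtain ⟨h1, h2, h3, h4⟩ := hc
    simp_all
  · rw [if_neg hc, h0 p hc]

private lemma quad {A B : Type*} [Fintype A] [Fintype B]
    (ρ ξ : Matrix (A × B) (A × B) ℂ) (ψ : (A × A) × (B × B) → ℂ) :
    star (fun p : ((Fin 2 × A) × (Fin 2 × A)) × ((Fin 2 × B) × (Fin 2 × B)) =>
        if p.1.1.1 = 0 ∧ p.1.2.1 = 1 ∧ p.2.1.1 = 0 ∧ p.2.2.1 = 1 then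
          ψ ((p.1.1.2, p.1.2.2), (p.2.1.2, p.2.2.2)) else 0) ⬝ᵥ
      (ptAlice (bipKron (flagged ρ ξ) (flagged ρ ξ))).mulVec
        (fun p => if p.1.1.1 = 0 ∧ p.1.2.1 = 1 ∧ p.2.1.1 = 0 ∧ p.2.2.1 = 1 then
          ψ ((p.1.1.2, p.1.2.2), (p.2.1.2, p.2.2.2)) else 0)
    = (1 / 4 : ℂ) * (star ψ ⬝ᵥ (ptAlice (bipKron ρ ξ)).mulVec ψ) := by
  simp only [dotProduct, Matrix.mulVec, Pi.star_apply]
  rw [collapse'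
      (fun p => star (if p.1.1.1 = 0 ∧ p.1.2.1 = 1 ∧ p.2.1.1 = 0 ∧ p.2.2.1 = 1 then
          ψ ((p.1.1.2, p.1.2.2), (p.2.1.2, p.2.2.2)) else 0) *
        ∑ q, ptAlice (bipKron (flagged ρ ξ) (flagged ρ ξ)) p q *
          (if q.1.1.1 = 0 ∧ q.1.2.1 = 1 ∧ q.2.1.1 = 0 ∧ q.2.2.1 = 1 then
            ψ ((q.1.1.2, q.1.2.2), (q.2.1.2, q.2.2.2)) else 0))
      (fun s => star (ψ s) *
        ∑ t : (A × A) × (B × B), (1 / 4 : ℂ) * ptAlice (bipKron ρ ξ) s t * ψ t)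
      ?_ ?_]
  · simp only [Finset.mul_sum]
    refine Finset.sum_congr rfl fun s _ => Finset.sum_congr rfl fun t _ => ?_
    ring
  · intro s
    dsimp only
    rw [if_pos ⟨rfl, rfl, rfl, rfl⟩]
    congr 1
    rw [collapse'
        (fun q => ptAlice (bipKron (flagged ρ ξ) (flagged ρ ξ))
            (((0, s.1.1), (1, s.1.2)), ((0, s.2.1), (1, s.2.2))) q *
          (if q.1.1.1 = 0 ∧ q.1.2.1 = 1 ∧ q.2.1.1 = 0 ∧ q.2.2.1 = 1 then
            ψ ((q.1.1.2, q.1.2.2), (q.2.1.2, q.2.2.2)) else 0))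
        (fun t => (1 / 4 : ℂ) * ptAlice (bipKron ρ ξ) s t * ψ t)
        ?_ ?_]
    · intro t
      dsimp only
      rw [if_pos ⟨rfl, rfl, rfl, rfl⟩, pt_entry]
    · intro q hq
      rw [if_neg hq, mul_zero]
  · intro p hp
    rw [if_neg hp, star_zero, zero_mul]

/-- If `ρ ⊗ ξ` is 1-distillable, then
`σ = (1/2)|00⟩⟨00| ⊗ ρ + (1/2)|11⟩⟨11| ⊗ ξ` is 2-distillable: `σ ⊗ σ` is
1-distillable. -/
theorem stmt19 {A B : Type*} [Fintype A] [Fintype B] [DecidableEq A] [DecidableEq B]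
    (ρ ξ : Matrix (A × B) (A × B) ℂ)
    (hρ : ρ.PosSemidef) (hξ : ξ.PosSemidef)
    (hρtr : ρ.trace = 1) (hξtr : ξ.trace = 1)
    (h : OneDistillable (bipKron ρ ξ)) :
    OneDistillable (bipKron (flagged ρ ξ) (flagged ρ ξ)) := by
  obtain ⟨ψ, hrank, hneg⟩ := h
  refine ⟨fun p => if p.1.1.1 = 0 ∧ p.1.2.1 = 1 ∧ p.2.1.1 = 0 ∧ p.2.2.1 = 1 then
      ψ ((p.1.1.2, p.1.2.2), (p.2.1.2, p.2.2.2)) else 0, ?_, ?_⟩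
  · exact (rank_embed (Matrix.of fun a b => ψ (a, b))).trans hrank
  · rw [quad]
    have h4 : ∀ X : ℂ, ((1 / 4 : ℂ) * X).re = (1 / 4 : ℝ) * X.re := by
      intro X
      simp [Complex.mul_re]
    rw [h4]
    nlinarith [hneg]
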